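/- Let α be a countable type and let r be a confluent binary relation on α. Then r is decreasing for some labelling with a two-element label set: there exist relations r₀ and r₁ on α with r = r₀ ∪ r₁ (i.e., r a b holds iff r₀ a b or r₁ a b) such that, taking labels {0,1} with strict order 1 ≻ 0, every local peak b ←_i a →_j c (i, j ∈ {0,1}) can be completed into a decreasing diagram: there exist b₁, b₂, c₂, c₁ with b ↔*_{⋎i} b₁, (b₁ →_j b₂ or b₁ = b₂), b₂ ↔*_{⋎{i,j}} c₂, (c₁ →_i c₂ or c₁ = c₂), and c₁ ↔*_{⋎j} c. -/

import Mathlib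

/-- Union of the relations whose label lies in `J`. -/
def RelOver {α I : Type*} (r : I → α → α → Prop) (J : Set I) : α → α → Prop :=
  fun a b => ∃ l ∈ J, r l a b

/-- Conversion: reflexive–transitive closure of the symmetric closure. -/
def Conv {α : Type*} (r : α → α → Prop) : α → α → Prop :=
  Relation.ReflTransGen (fun a b => r a b ∨ r b a)

namespace DCR2
open Relation Classical

variable {α : Type*} (r : α → α → Prop)

theorem conv_refl (a : α) : Conv r a a := ReflTransGen.refl

theorem conv_of_rt {a b : α} (h : ReflTransGen r a b) : Conv r a b :=
  ReflTransGen.mono (fun _ _ h => Or.inl h) _ _ h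

theorem conv_symm {a b : α} (h : Conv r a b) : Conv r b a :=
  by haveI : Std.Symm (fun a b : α => r a b ∨ r b a) := ⟨fun _ _ h => h.elim Or.inr Or.inl⟩
     exact (inferInstance : Std.Symm (ReflTransGen fun a b : α => r a b ∨ r b a)).symm _ _ h

theorem conv_trans {a b c : α} (h1 : Conv r a b) (h2 : Conv r b c) : Conv r a c :=
  ReflTransGen.trans h1 h2

theorem conv_single {a b : α} (h : r a b) : Conv r a b :=
  ReflTransGen.single (Or.inl h)

theorem conv_mono {p p' : α → α → Prop} (h : ∀ u v, p u v → p' u v) {x y : α}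
    (hc : Conv p x y) : Conv p' x y :=
  ReflTransGen.mono (fun u v (hv : p u v ∨ p v u) => hv.imp (h u v) (h v u)) _ _ hc

theorem cr (hconf : ∀ a b c : α, ReflTransGen r a b → ReflTransGen r a c →
      ∃ d, ReflTransGen r b d ∧ ReflTransGen r c d) {a b : α} (h : Conv r a b) :
    ∃ d, ReflTransGen r a d ∧ ReflTransGen r b d := by
  induction h with
  | refl => exact ⟨a, .refl, .refl⟩
  | tail hab hbc ih =>
    obtain ⟨d, had, hbd⟩ := ih
    rcases hbc with h | h
    · obtain ⟨d', h1, h2⟩ := hconf _ _ _ hbd (ReflTransGen.single h)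
      exact ⟨d', had.trans h1, h2⟩
    · exact ⟨d, had, ReflTransGen.head h hbd⟩

/-- `reach P n a` : there is an `r`-path of length `n` from `a` into `P`. -/
def reach (P : α → Prop) : ℕ → α → Prop
  | 0, a => P a
  | n+1, a => ∃ b, r a b ∧ reach P n b

theorem reach_of_rt {P : α → Prop} {a x : α} (hx : P x) (h : ReflTransGen r a x) :
    ∃ n, reach r P n a := by
  induction h using ReflTransGen.head_induction_on with
  | refl => exact ⟨0, hx⟩
  | head hab _ ih => obtain ⟨n, hn⟩ := ih; exact ⟨n+1, _, hab, hn⟩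

theorem reach_rt {P : α → Prop} : ∀ {n : ℕ} {a : α}, reach r P n a →
    ∃ x, P x ∧ ReflTransGen r a x
  | 0, a, h => ⟨a, h, .refl⟩
  | n+1, _, ⟨b, hb, h⟩ =>
    let ⟨x, hx, hr⟩ := reach_rt (n := n) h
    ⟨x, hx, .head hb hr⟩

theorem gAux_ex {P : α → Prop} {a : α} (h : ¬ P a ∧ ∃ n, reach r P n a) :
    ∃ b, r a b ∧ reach r P (Nat.find h.2 - 1) b := by
  have hn := Nat.find_spec h.2
  have h0 : Nat.find h.2 ≠ 0 := by intro h0; rw [h0] at hn; exact h.1 hn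
  obtain ⟨m, hm⟩ := Nat.exists_eq_succ_of_ne_zero h0
  rw [hm] at hn
  obtain ⟨b, hb, hrb⟩ := hn
  exact ⟨b, hb, by rw [hm]; simpa using hrb⟩

noncomputable def gAux (P : α → Prop) (a : α) : Option α :=
  if h : ¬ P a ∧ ∃ n, reach r P n a then some (gAux_ex r h).choose else none

theorem gAux_spec {P : α → Prop} {a b : α} (hab : gAux r P a = some b) :
    ¬ P a ∧ r a b ∧ ∃ hex : ∃ n, reach r P n a, reach r P (Nat.find hex - 1) b := by
  unfold gAux at hab
  split at hab
  case isTrue h =>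
    obtain ⟨hb1, hb2⟩ := (gAux_ex r h).choose_spec
    obtain rfl := Option.some.inj hab
    exact ⟨h.1, hb1, h.2, hb2⟩
  case isFalse => cases hab

theorem gAux_eq {P : α → Prop} {a : α} (h : ¬ P a ∧ ∃ n, reach r P n a) :
    gAux r P a = some (gAux_ex r h).choose := by
  unfold gAux
  rw [dif_pos h]

theorem absorb {P : α → Prop} : ∀ (n : ℕ) {a : α} (hex : ∃ m, reach r P m a),
    Nat.find hex ≤ n → ∃ x, P x ∧ Conv (fun u v => gAux r P u = some v) a x := by
  intro n
  induction n with
  | zero =>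
    intro a hex h0
    have := Nat.find_spec hex
    rw [Nat.le_zero.mp h0] at this
    exact ⟨a, this, conv_refl _ a⟩
  | succ n ih =>
    intro a hex hn
    by_cases hPa : P a
    · exact ⟨a, hPa, conv_refl _ a⟩
    · have h : ¬ P a ∧ ∃ m, reach r P m a := ⟨hPa, hex⟩
      set b := (gAux_ex r h).choose with hb
      obtain ⟨hrab, hreach⟩ := (gAux_ex r h).choose_spec
      have hedge : gAux r P a = some b := gAux_eq r h
      have hexb : ∃ m, reach r P m b := ⟨_, hreach⟩
      have hfind0 : Nat.find h.2 ≠ 0 := by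
        intro h0
        have := Nat.find_spec h.2
        rw [h0] at this
        exact hPa this
      have hfind : Nat.find hexb ≤ n := by
        have h1 : Nat.find hexb ≤ Nat.find h.2 - 1 := Nat.find_le hreach
        have h2 : Nat.find h.2 = Nat.find hex := rfl
        omega
      obtain ⟨x, hx, hcx⟩ := ih hexb hfind
      exact ⟨x, hx, ReflTransGen.head (Or.inl hedge) hcx⟩

theorem absorb' {P : α → Prop} {a : α} (hex : ∃ m, reach r P m a) :
    ∃ x, P x ∧ Conv (fun u v => gAux r P u = some v) a x :=
  absorb r (Nat.find hex) hex le_rfl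

theorem exists_chain {x y : α} (h : ReflTransGen r x y) :
    ∃ l : List α, l ≠ [] ∧ l.head? = some x ∧ l.getLast? = some y ∧ l.Chain' r := by
  induction h using ReflTransGen.head_induction_on with
  | refl => exact ⟨[y], by simp, by simp, by simp, List.isChain_singleton _⟩
  | @head a c hab _ ih =>
    obtain ⟨l, hne, hh, hl, hc⟩ := ih
    obtain ⟨d, l', rfl⟩ := List.exists_cons_of_ne_nil hne
    have hd : d = c := by simpa using hh
    subst hd
    refine ⟨a :: d :: l', by simp, by simp, by simpa using hl, ?_⟩
    exact List.IsChain.cons_cons hab hc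

section Ladder

variable (hconf : ∀ a b c : α, Relation.ReflTransGen r a b → Relation.ReflTransGen r a c →
      ∃ d, Relation.ReflTransGen r b d ∧ Relation.ReflTransGen r c d)
variable (e : ℕ → α) (ρ : α)

noncomputable def jnt {x y : α} (h : Conv r x y) : α := (cr r hconf h).choose

theorem jnt_l {x y : α} (h : Conv r x y) : ReflTransGen r x (jnt r hconf h) :=
  (cr r hconf h).choose_spec.1

theorem jnt_r {x y : α} (h : Conv r x y) : ReflTransGen r y (jnt r hconf h) :=
  (cr r hconf h).choose_spec.2

noncomputable def tAux : ℕ → {x : α // Conv r ρ x}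
  | 0 => ⟨ρ, ReflTransGen.refl⟩
  | n+1 =>
    let p := tAux n
    if h : Conv r ρ (e n) then
      let hc : Conv r p.1 (e n) := conv_trans r (conv_symm r p.2) h
      ⟨jnt r hconf hc, conv_trans r p.2 (conv_of_rt r (jnt_l r hconf hc))⟩
    else p

noncomputable def t (n : ℕ) : α := (tAux r hconf e ρ n).1

theorem conv_t (n : ℕ) : Conv r ρ (t r hconf e ρ n) := (tAux r hconf e ρ n).2

theorem t_step (n : ℕ) :
    ReflTransGen r (t r hconf e ρ n) (t r hconf e ρ (n+1)) := by
  show ReflTransGen r (tAux r hconf e ρ n).1 (tAux r hconf e ρ (n+1)).1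
  simp only [tAux]
  split
  next h => exact jnt_l r hconf (conv_trans r (conv_symm r (tAux r hconf e ρ n).2) h)
  next => exact ReflTransGen.refl

theorem t_mono {m n : ℕ} (h : m ≤ n) :
    ReflTransGen r (t r hconf e ρ m) (t r hconf e ρ n) := by
  induction h with
  | refl => exact ReflTransGen.refl
  | step _ ih => exact ih.trans (t_step r hconf e ρ _)

theorem e_t (n : ℕ) (h : Conv r ρ (e n)) :
    ReflTransGen r (e n) (t r hconf e ρ (n+1)) := by
  show ReflTransGen r (e n) (tAux r hconf e ρ (n+1)).1
  simp only [tAux]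
  rw [dif_pos h]
  exact jnt_r r hconf (conv_trans r (conv_symm r (tAux r hconf e ρ n).2) h)

noncomputable def seg (n : ℕ) : List α :=
  (exists_chain r (t_step r hconf e ρ n)).choose

theorem seg_spec (n : ℕ) :
    seg r hconf e ρ n ≠ [] ∧ (seg r hconf e ρ n).head? = some (t r hconf e ρ n) ∧
      (seg r hconf e ρ n).getLast? = some (t r hconf e ρ (n+1)) ∧
      (seg r hconf e ρ n).Chain' r :=
  (exists_chain r (t_step r hconf e ρ n)).choose_spec

noncomputable def full : ℕ → List α
  | 0 => [ρ]
  | n+1 => full n ++ (seg r hconf e ρ n).tail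

theorem full_ne (n : ℕ) : full r hconf e ρ n ≠ [] := by
  induction n with
  | zero => simp [full]
  | succ n ih => simp only [full]; exact fun h => ih (List.append_eq_nil_iff.mp h).1

theorem full_prefix {m n : ℕ} (h : m ≤ n) :
    full r hconf e ρ m <+: full r hconf e ρ n := by
  induction h with
  | refl => exact List.prefix_refl _
  | step _ ih => exact ih.trans (by simp only [full]; exact List.prefix_append _ _)

theorem full_head (n : ℕ) : (full r hconf e ρ n).head? = some ρ := by
  obtain ⟨s, hs⟩ := full_prefix r hconf e ρ (Nat.zero_le n)
  rw [← hs]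
  rfl

theorem t_succ_of_tail_nil {n : ℕ} (h : (seg r hconf e ρ n).tail = []) :
    t r hconf e ρ (n+1) = t r hconf e ρ n := by
  obtain ⟨hne, hh, hl, _⟩ := seg_spec r hconf e ρ n
  obtain ⟨d, l', hseg⟩ := List.exists_cons_of_ne_nil hne
  rw [hseg] at h hh hl
  simp at h
  subst h
  simp at hh hl
  rw [← hh, ← hl]

theorem full_last (n : ℕ) :
    (full r hconf e ρ n).getLast? = some (t r hconf e ρ n) := by
  induction n with
  | zero => rfl
  | succ n ih =>
    simp only [full]
    rcases htl : (seg r hconf e ρ n).tail with _ | ⟨d, l'⟩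
    · rw [t_succ_of_tail_nil r hconf e ρ htl]
      simpa using ih
    · rw [List.getLast?_append]
      obtain ⟨hne, hh, hl, _⟩ := seg_spec r hconf e ρ n
      obtain ⟨d0, l0, hseg⟩ := List.exists_cons_of_ne_nil hne
      rw [hseg] at hl htl
      simp only [List.tail_cons] at htl
      subst htl
      rw [List.getLast?_cons_cons] at hl
      rw [hl]
      rfl

theorem full_chain (n : ℕ) : (full r hconf e ρ n).Chain' r := by
  induction n with
  | zero => exact List.isChain_singleton _
  | succ n ih =>
    simp only [full]
    rw [show List.Chain' r _ = List.IsChain r _ from rfl, List.isChain_append]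
    obtain ⟨hne, hh, hl, hch⟩ := seg_spec r hconf e ρ n
    refine ⟨ih, hch.tail, ?_⟩
    intro x hx y hy
    rw [full_last r hconf e ρ n] at hx
    obtain rfl : t r hconf e ρ n = x := by simpa using hx
    obtain ⟨d0, l0, hseg⟩ := List.exists_cons_of_ne_nil hne
    rw [hseg] at hh hch hy
    obtain rfl : d0 = t r hconf e ρ n := by simpa using hh
    simp only [List.tail_cons] at hy
    rcases l0 with _ | ⟨d1, l1⟩
    · simp at hy
    · obtain rfl : d1 = y := by simpa using hy
      exact (List.isChain_cons_cons.mp hch).1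

theorem len_mono {m n : ℕ} (h : m ≤ n) :
    (full r hconf e ρ m).length ≤ (full r hconf e ρ n).length :=
  (full_prefix r hconf e ρ h).length_le

theorem t_succ_of_len {n : ℕ}
    (h : (full r hconf e ρ (n+1)).length = (full r hconf e ρ n).length) :
    t r hconf e ρ (n+1) = t r hconf e ρ n := by
  apply t_succ_of_tail_nil
  apply List.length_eq_zero_iff.mp
  simp only [full, List.length_append] at h
  omega

theorem len_unbounded (he : ∀ a, ∃ k, e k = a)
    (hns : ¬ ∃ v, ∀ a, Conv r ρ a → ReflTransGen r a v) :
    ∀ k, ∃ n, k < (full r hconf e ρ n).length := by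
  by_contra hb
  push_neg at hb
  obtain ⟨k, hk⟩ := hb
  have h1 : (full r hconf e ρ 0).length = 1 := rfl
  have hk1 : 1 ≤ k := h1 ▸ hk 0
  set P : ℕ → Prop := fun m => ∃ n, (full r hconf e ρ n).length = m with hP
  have hPmax : ∀ n, (full r hconf e ρ n).length ≤ Nat.findGreatest P k :=
    fun n => Nat.le_findGreatest (hk n) ⟨n, rfl⟩
  obtain ⟨N, hN⟩ : P (Nat.findGreatest P k) := Nat.findGreatest_spec hk1 ⟨0, h1⟩
  have hconst : ∀ n, N ≤ n → t r hconf e ρ n = t r hconf e ρ N := by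
    intro n hn
    induction hn with
    | refl => rfl
    | @step m hm ih =>
      have hlen : (full r hconf e ρ (m+1)).length = (full r hconf e ρ m).length := by
        have h2 : (full r hconf e ρ m).length ≤ (full r hconf e ρ (m+1)).length :=
          len_mono r hconf e ρ (Nat.le_succ m)
        have h3 := hPmax (m+1)
        have h4 : Nat.findGreatest P k ≤ (full r hconf e ρ m).length := by
          rw [← hN]; exact len_mono r hconf e ρ hm
        omega
      rw [t_succ_of_len r hconf e ρ hlen]
      exact ih
  apply hns
  refine ⟨t r hconf e ρ N, ?_⟩
  intro a ha
  obtain ⟨m, rfl⟩ := he a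
  have h2 := e_t r hconf e ρ m ha
  have h3 := t_mono r hconf e ρ (le_max_left (m+1) N)
  rw [hconst (max (m+1) N) (le_max_right _ _)] at h3
  exact h2.trans h3

variable (he : ∀ a, ∃ k, e k = a)
  (hns : ¬ ∃ v, ∀ a, Conv r ρ a → ReflTransGen r a v)

noncomputable def q (k : ℕ) : α :=
  (full r hconf e ρ (Nat.find (len_unbounded r hconf e ρ he hns k))).getD k ρ

theorem prefix_getD {l₁ l₂ : List α} (h : l₁ <+: l₂) {k : ℕ} (hk : k < l₁.length)
    (d : α) : l₁.getD k d = l₂.getD k d := by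
  rw [List.getD_eq_getElem _ _ hk, List.getD_eq_getElem _ _ (lt_of_lt_of_le hk h.length_le),
    h.getElem hk]

theorem q_eq {k n : ℕ} (h : k < (full r hconf e ρ n).length) :
    q r hconf e ρ he hns k = (full r hconf e ρ n).getD k ρ := by
  unfold q
  have h0 := Nat.find_spec (len_unbounded r hconf e ρ he hns k)
  rcases le_total (Nat.find (len_unbounded r hconf e ρ he hns k)) n with hle | hle
  · exact prefix_getD (full_prefix r hconf e ρ hle) h0 ρ
  · exact (prefix_getD (full_prefix r hconf e ρ hle) h ρ).symm

theorem q_step (k : ℕ) : r (q r hconf e ρ he hns k) (q r hconf e ρ he hns (k+1)) := by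
  obtain ⟨n, hn⟩ := len_unbounded r hconf e ρ he hns (k+1)
  rw [q_eq r hconf e ρ he hns (Nat.lt_of_succ_lt hn), q_eq r hconf e ρ he hns hn]
  rw [List.getD_eq_getElem _ _ (Nat.lt_of_succ_lt hn), List.getD_eq_getElem _ _ hn]
  have := List.isChain_iff_getElem.mp (full_chain r hconf e ρ n) k (by omega)
  simpa using this

theorem rt_q {i j : ℕ} (h : i ≤ j) :
    ReflTransGen r (q r hconf e ρ he hns i) (q r hconf e ρ he hns j) := by
  induction h with
  | refl => exact ReflTransGen.refl
  | step _ ih => exact ih.tail (q_step r hconf e ρ he hns _)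

theorem q_zero : q r hconf e ρ he hns 0 = ρ := by
  set n := Nat.find (len_unbounded r hconf e ρ he hns 0) with hn
  have h0 : 0 < (full r hconf e ρ n).length := by rw [hn]; exact Nat.find_spec (len_unbounded r hconf e ρ he hns 0)
  show (full r hconf e ρ n).getD 0 ρ = ρ
  rw [List.getD_eq_getElem _ _ h0, List.getElem_zero]
  have hh := full_head r hconf e ρ n
  rw [List.head?_eq_head (full_ne r hconf e ρ n)] at hh
  exact Option.some.inj hh

theorem conv_ρ_q (k : ℕ) : Conv r ρ (q r hconf e ρ he hns k) := by
  have h := rt_q r hconf e ρ he hns (Nat.zero_le k)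
  rw [q_zero r hconf e ρ he hns] at h
  exact conv_of_rt r h

theorem t_q (n : ℕ) : ∃ k, q r hconf e ρ he hns k = t r hconf e ρ n := by
  have hpos : 0 < (full r hconf e ρ n).length :=
    List.length_pos_iff.mpr (full_ne r hconf e ρ n)
  refine ⟨(full r hconf e ρ n).length - 1, ?_⟩
  rw [q_eq r hconf e ρ he hns (n := n) (by omega), List.getD_eq_getElem _ _ (by omega)]
  have hl := full_last r hconf e ρ n
  rw [List.getLast?_eq_getElem?, List.getElem?_eq_getElem (by omega)] at hl
  exact Option.some.inj hl

theorem cofinal_q {a : α} (ha : Conv r ρ a) :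
    ∃ k, ReflTransGen r a (q r hconf e ρ he hns k) := by
  obtain ⟨m, rfl⟩ := he a
  obtain ⟨k, hk⟩ := t_q r hconf e ρ he hns (m+1)
  refine ⟨k, ?_⟩
  rw [hk]
  exact e_t r hconf e ρ m ha

theorem fin_occ (v : α) : ∃ K, ∀ j, K < j → q r hconf e ρ he hns j ≠ v := by
  by_contra hb
  push_neg at hb
  apply hns
  refine ⟨v, ?_⟩
  intro a ha
  obtain ⟨k, hk⟩ := cofinal_q r hconf e ρ he hns ha
  obtain ⟨j, hj, hjv⟩ := hb k
  rw [← hjv]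
  exact hk.trans (rt_q r hconf e ρ he hns (le_of_lt hj))

theorem last_occ (i : ℕ) : ∃ k, q r hconf e ρ he hns k = q r hconf e ρ he hns i ∧
    ∀ j, k < j → q r hconf e ρ he hns j ≠ q r hconf e ρ he hns i := by
  obtain ⟨K, hK⟩ := fin_occ r hconf e ρ he hns (q r hconf e ρ he hns i)
  have hiK : i ≤ K := by
    by_contra h
    push_neg at h
    exact hK i h rfl
  refine ⟨Nat.findGreatest (fun k => q r hconf e ρ he hns k = q r hconf e ρ he hns i) K,
    Nat.findGreatest_spec (P := fun k => q r hconf e ρ he hns k = q r hconf e ρ he hns i)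
      hiK rfl, ?_⟩
  intro j hj
  rcases le_or_gt j K with h | h
  · exact Nat.findGreatest_is_greatest hj h
  · exact hK j h

noncomputable def mseq : ℕ → ℕ
  | 0 => 0
  | k+1 => (last_occ r hconf e ρ he hns (mseq k)).choose + 1

theorem mseq_lt (k : ℕ) : mseq r hconf e ρ he hns k < mseq r hconf e ρ he hns (k+1) := by
  have hs := (last_occ r hconf e ρ he hns (mseq r hconf e ρ he hns k)).choose_spec
  have h1 : mseq r hconf e ρ he hns k ≤
      (last_occ r hconf e ρ he hns (mseq r hconf e ρ he hns k)).choose := by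
    by_contra h
    push_neg at h
    exact hs.2 _ h rfl
  show _ < _
  simp only [mseq]
  omega

theorem mseq_smono : StrictMono (mseq r hconf e ρ he hns) :=
  strictMono_nat_of_lt_succ (mseq_lt r hconf e ρ he hns)

noncomputable def ray (k : ℕ) : α := q r hconf e ρ he hns (mseq r hconf e ρ he hns k)

theorem ray_step (k : ℕ) : r (ray r hconf e ρ he hns k) (ray r hconf e ρ he hns (k+1)) := by
  have hs := (last_occ r hconf e ρ he hns (mseq r hconf e ρ he hns k)).choose_spec
  have h1 := q_step r hconf e ρ he hns
    ((last_occ r hconf e ρ he hns (mseq r hconf e ρ he hns k)).choose)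
  rw [hs.1] at h1
  show r (q r hconf e ρ he hns (mseq r hconf e ρ he hns k))
    (q r hconf e ρ he hns (mseq r hconf e ρ he hns (k+1)))
  simp only [mseq]
  exact h1

theorem ray_inj : Function.Injective (ray r hconf e ρ he hns) := by
  have key : ∀ j k, j < k → ray r hconf e ρ he hns j ≠ ray r hconf e ρ he hns k := by
    intro j k hjk heq
    have hs := (last_occ r hconf e ρ he hns (mseq r hconf e ρ he hns j)).choose_spec
    have h1 : mseq r hconf e ρ he hns (j+1) ≤ mseq r hconf e ρ he hns k :=
      (mseq_smono r hconf e ρ he hns).le_iff_le.mpr hjk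
    have h2 : (last_occ r hconf e ρ he hns (mseq r hconf e ρ he hns j)).choose <
        mseq r hconf e ρ he hns k := by
      simp only [mseq] at h1
      omega
    exact hs.2 _ h2 heq.symm
  intro j k hjk
  by_contra hne
  rcases lt_trichotomy j k with h | h | h
  · exact key j k h hjk
  · exact hne h
  · exact key k j h hjk.symm

theorem cofinal_ray {a : α} (ha : Conv r ρ a) :
    ∃ k, ReflTransGen r a (ray r hconf e ρ he hns k) := by
  obtain ⟨i, hi⟩ := cofinal_q r hconf e ρ he hns ha
  exact ⟨i, hi.trans (rt_q r hconf e ρ he hns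
    (mseq_smono r hconf e ρ he hns).le_apply)⟩

theorem conv_ρ_ray (k : ℕ) : Conv r ρ (ray r hconf e ρ he hns k) :=
  conv_ρ_q r hconf e ρ he hns _

end Ladder

theorem component
    (hconf : ∀ a b c : α, ReflTransGen r a b → ReflTransGen r a c →
      ∃ d, ReflTransGen r b d ∧ ReflTransGen r c d)
    (e : ℕ → α) (he : ∀ a, ∃ k, e k = a) (ρ : α) :
    ∃ g : α → Option α,
      (∀ a b, g a = some b → r a b ∧ Conv r ρ a ∧ Conv r ρ b) ∧
      (∀ a, Conv r ρ a → Conv (fun u v => g u = some v) a ρ) := by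
  by_cases hs : ∃ v, ∀ a, Conv r ρ a → ReflTransGen r a v
  · obtain ⟨v, hv⟩ := hs
    have hρv : Conv r ρ v := conv_of_rt r (hv ρ (conv_refl r ρ))
    refine ⟨gAux r (· = v), ?_, ?_⟩
    · intro a b hab
      obtain ⟨hna, hr, hex, -⟩ := gAux_spec r hab
      obtain ⟨x, hx, hax⟩ := reach_rt r (Nat.find_spec hex)
      subst hx
      have hρa : Conv r ρ a := conv_trans r hρv (conv_symm r (conv_of_rt r hax))
      exact ⟨hr, hρa, conv_trans r hρa (conv_single r hr)⟩
    · intro a ha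
      obtain ⟨x, hx, hcx⟩ := absorb' r (reach_of_rt r (P := fun x => x = v) rfl (hv a ha))
      obtain ⟨y, hy, hcy⟩ := absorb' r (reach_of_rt r (P := fun x => x = v) rfl (hv ρ (conv_refl r ρ)))
      rw [hx] at hcx
      rw [hy] at hcy
      exact conv_trans _ hcx (conv_symm _ hcy)
  · set P : α → Prop := fun x => ∃ k, ray r hconf e ρ he hs k = x with hP
    set g : α → Option α := fun a =>
      if h : P a then some (ray r hconf e ρ he hs (h.choose + 1)) else gAux r P a with hg
    have hgP : ∀ a (h : P a), g a = some (ray r hconf e ρ he hs (h.choose + 1)) := by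
      intro a h
      simp only [hg]
      rw [dif_pos h]
    have hgnP : ∀ a, ¬ P a → g a = gAux r P a := by
      intro a h
      simp only [hg]
      rw [dif_neg h]
    have hedge : ∀ a b, g a = some b → r a b ∧ Conv r ρ a ∧ Conv r ρ b := by
      intro a b hab
      by_cases hPa : P a
      · rw [hgP a hPa] at hab
        obtain rfl := Option.some.inj hab
        have hspec := hPa.choose_spec
        have hstep := ray_step r hconf e ρ he hs hPa.choose
        rw [hspec] at hstep
        have hc := conv_ρ_ray r hconf e ρ he hs hPa.choose
        rw [hspec] at hc
        exact ⟨hstep, hc, conv_ρ_ray r hconf e ρ he hs _⟩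
      · rw [hgnP a hPa] at hab
        obtain ⟨hna, hr, hex, -⟩ := gAux_spec r hab
        obtain ⟨x, hx, hax⟩ := reach_rt r (Nat.find_spec hex)
        obtain ⟨k, rfl⟩ := hx
        have hρa : Conv r ρ a :=
          conv_trans r (conv_ρ_ray r hconf e ρ he hs k) (conv_symm r (conv_of_rt r hax))
        exact ⟨hr, hρa, conv_trans r hρa (conv_single r hr)⟩
    refine ⟨g, hedge, ?_⟩
    have hredge : ∀ k, g (ray r hconf e ρ he hs k) =
        some (ray r hconf e ρ he hs (k+1)) := by
      intro k
      have hPk : P (ray r hconf e ρ he hs k) := ⟨k, rfl⟩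
      rw [hgP _ hPk]
      have hck : hPk.choose = k := ray_inj r hconf e ρ he hs hPk.choose_spec
      rw [hck]
    have hray0 : ∀ k, Conv (fun u v => g u = some v) (ray r hconf e ρ he hs 0)
        (ray r hconf e ρ he hs k) := by
      intro k
      induction k with
      | zero => exact conv_refl _ _
      | succ k ih => exact ReflTransGen.tail ih (Or.inl (hredge k))
    have hlift : ∀ {u w : α}, Conv (fun u v => gAux r P u = some v) u w →
        Conv (fun u v => g u = some v) u w :=
      fun h => conv_mono (fun u w h' => by rw [hgnP u (gAux_spec r h').1]; exact h') h
    have hmain : ∀ a, Conv r ρ a →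
        Conv (fun u v => g u = some v) a (ray r hconf e ρ he hs 0) := by
      intro a ha
      obtain ⟨k, hk⟩ := cofinal_ray r hconf e ρ he hs ha
      obtain ⟨x, hx, hcx⟩ := absorb' r (reach_of_rt r (P := P) ⟨k, rfl⟩ hk)
      obtain ⟨kx, rfl⟩ := hx
      exact conv_trans _ (hlift hcx) (conv_symm _ (hray0 kx))
    intro a ha
    exact conv_trans _ (hmain a ha) (conv_symm _ (hmain ρ (conv_refl r ρ)))

theorem exists_fun [Countable α]
    (hconf : ∀ a b c : α, ReflTransGen r a b → ReflTransGen r a c →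
      ∃ d, ReflTransGen r b d ∧ ReflTransGen r c d) :
    ∃ f : α → Option α, (∀ a b, f a = some b → r a b) ∧
      ∀ a b, r a b → Conv (fun u v => f u = some v) a b := by
  rcases isEmpty_or_nonempty α with hα | hα
  · exact ⟨fun _ => none, fun a => isEmptyElim a, fun a => isEmptyElim a⟩
  obtain ⟨e, he⟩ := exists_surjective_nat α
  have he' : ∀ a, ∃ k, e k = a := he
  choose G hG1 hG2 using fun ρ => component r hconf e he' ρ
  have hrep : ∀ a : α, ∃ k, Conv r (e k) a := by
    intro a
    obtain ⟨k, hk⟩ := he' a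
    exact ⟨k, by rw [hk]; exact conv_refl r a⟩
  set f : α → Option α := fun a => G (e (Nat.find (hrep a))) a with hf
  have hrepc : ∀ a, Conv r (e (Nat.find (hrep a))) a := fun a => Nat.find_spec (hrep a)
  have hfind_eq : ∀ a b, Conv r a b → Nat.find (hrep a) = Nat.find (hrep b) := by
    intro a b h
    apply le_antisymm
    · exact Nat.find_le (conv_trans r (hrepc b) (conv_symm r h))
    · exact Nat.find_le (conv_trans r (hrepc a) h)
  refine ⟨f, ?_, ?_⟩
  · intro a b hab
    exact (hG1 _ a b hab).1
  · intro a b hab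
    set ρ := e (Nat.find (hrep a)) with hρ
    have h1 : Conv r ρ a := hrepc a
    have h2 : Conv r ρ b := conv_trans r h1 (conv_single r hab)
    have hca : Conv (fun u v => G ρ u = some v) a ρ := hG2 ρ a h1
    have hcb : Conv (fun u v => G ρ u = some v) b ρ := hG2 ρ b h2
    have hlift : ∀ {u w : α}, Conv (fun u v => G ρ u = some v) u w →
        Conv (fun u v => f u = some v) u w := by
      intro u w h
      refine conv_mono (fun u w h' => ?_) h
      have hρu : Conv r ρ u := (hG1 ρ u w h').2.1
      have : Nat.find (hrep u) = Nat.find (hrep a) := by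
        rw [hfind_eq u a (conv_trans r (conv_symm r hρu) h1)]
      simp only [hf, this, ← hρ]
      exact h'
    exact conv_trans _ (hlift hca) (conv_symm _ (hlift hcb))

end DCR2

/-- Every countable confluent relation is decreasing for a two-element label set
`Fin 2` ordered by `<` (so label `1 ≻ 0`). -/
theorem stmt_1 {α : Type*} [Countable α] (r : α → α → Prop)
    (hconf : ∀ a b c, Relation.ReflTransGen r a b → Relation.ReflTransGen r a c →
      ∃ d, Relation.ReflTransGen r b d ∧ Relation.ReflTransGen r c d) :
    ∃ s : Fin 2 → α → α → Prop,
      (∀ a b, r a b ↔ (s 0 a b ∨ s 1 a b)) ∧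
      (∀ (i j : Fin 2) (a b c : α), s i a b → s j a c →
        ∃ b₁ b₂ c₂ c₁,
          Conv (RelOver s {k | k < i}) b b₁ ∧
          (s j b₁ b₂ ∨ b₁ = b₂) ∧
          Conv (RelOver s ({k | k < i} ∪ {k | k < j})) b₂ c₂ ∧
          (s i c₁ c₂ ∨ c₁ = c₂) ∧
          Conv (RelOver s {k | k < j}) c₁ c) := by
  obtain ⟨f, hf1, hf2⟩ := DCR2.exists_fun r hconf
  set s : Fin 2 → α → α → Prop :=
    fun i a b => if i = 0 then f a = some b else r a b with hs
  have h0 : ∀ a b, s 0 a b ↔ f a = some b := by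
    intro a b
    simp [hs]
  have h1 : ∀ a b, s 1 a b ↔ r a b := by
    intro a b
    simp only [hs]
    rw [if_neg (show (1 : Fin 2) ≠ 0 by decide)]
  have hstep : ∀ i a b, s i a b → r a b := by
    intro i a b h
    by_cases hi : i = 0
    · subst hi
      exact hf1 a b ((h0 a b).mp h)
    · simp only [hs] at h
      rw [if_neg hi] at h
      exact h
  refine ⟨s, ?_, ?_⟩
  · intro a b
    constructor
    · intro h
      exact Or.inr ((h1 a b).mpr h)
    · rintro (h | h)
      · exact hstep 0 a b h
      · exact hstep 1 a b h
  · intro i j a b c hb hc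
    have hconvbc : Conv (fun u v => f u = some v) b c :=
      DCR2.conv_trans _ (DCR2.conv_symm _ (hf2 a b (hstep i a b hb)))
        (hf2 a c (hstep j a c hc))
    have hmid : ∀ S : Set (Fin 2), (0:Fin 2) ∈ S → Conv (RelOver s S) b c := by
      intro S hS
      exact DCR2.conv_mono (fun u v h => ⟨0, hS, (h0 u v).mpr h⟩) hconvbc
    by_cases hij : i = 0 ∧ j = 0
    · obtain ⟨rfl, rfl⟩ := hij
      obtain rfl : b = c := Option.some.inj (((h0 a b).mp hb).symm.trans ((h0 a c).mp hc))
      exact ⟨b, b, b, b, Relation.ReflTransGen.refl, Or.inr rfl, Relation.ReflTransGen.refl,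
        Or.inr rfl, Relation.ReflTransGen.refl⟩
    · have h0mem : (0:Fin 2) ∈ ({k | k < i} ∪ {k | k < j} : Set (Fin 2)) := by
        rcases not_and_or.mp hij with h | h
        · exact Or.inl (Fin.pos_iff_ne_zero.mpr h)
        · exact Or.inr (Fin.pos_iff_ne_zero.mpr h)
      exact ⟨b, b, c, c, Relation.ReflTransGen.refl, Or.inr rfl, hmid _ h0mem,
        Or.inr rfl, Relation.ReflTransGen.refl⟩
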